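/- For m ≥ r ≥ l ≥ 1 and 1 ≤ β < m, the number of two-column SSYTs with column lengths r ≥ l, entries at most m, and containing β in the second column is Y_{r,l}^β(m) = Σ_{1 ≤ f ≤ e ≤ β} N_{e-1,f-1} · SSYT_{r-f, l-f}(m-e), where N_{e,f} = (1/e) C(e, f+1) C(e, f) is the Narayana number. -/

import Mathlib

/-- Binomial coefficient for integer arguments, with the convention
`C(n,k) = 0` whenever `k < 0` or `k > n`. -/
def Cz (n k : ℤ) : ℤ :=
  if 0 ≤ k ∧ k ≤ n then (n.toNat.choose k.toNat : ℤ) else 0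

/-- The closed formula `SSYT_{r,k}(m) = ((r-k+1)/(r+1)) C(m,r) C(m+1,k)` for `m ≥ r ≥ k ≥ 0`,
and `0` otherwise. -/
def ssytF (r k m : ℤ) : ℚ :=
  if 0 ≤ k ∧ k ≤ r ∧ r ≤ m then
    ((r - k + 1) * Cz m r * Cz (m + 1) k : ℤ) / ((r : ℚ) + 1)
  else 0

/-- The Narayana number `N_{e,f} = (1/e) C(e,f+1) C(e,f)` (for `e ≥ 1`;
`N_{0,0} = 1` and `N_{0,f} = 0` for `f ≥ 1`). -/
def Nar (e f : ℕ) : ℚ :=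
  if e = 0 then (if f = 0 then 1 else 0)
  else (1 / (e : ℚ)) * (e.choose (f + 1) : ℚ) * (e.choose f : ℚ)

/-- `Ycard r l m β` is the number of SSYTs with two columns of lengths `r ≥ l`, entries in
`{1,…,m}` (encoded in `Fin m`, value = index + 1), such that the value `β` appears
somewhere in the second column. -/
noncomputable def Ycard (r l m β : ℕ) : ℕ :=
  Nat.card {p : (Fin r → Fin m) × (Fin l → Fin m) //
    (StrictMono p.1 ∧ StrictMono p.2 ∧
      ∀ (i : Fin r) (j : Fin l), (i : ℕ) = (j : ℕ) → p.1 i ≤ p.2 j) ∧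
    ∃ j : Fin l, (p.2 j : ℕ) + 1 = β}

lemma Cz_natCast (a b : ℕ) : Cz (a : ℤ) (b : ℤ) = (a.choose b : ℤ) := by
  unfold Cz
  by_cases h : (b : ℤ) ≤ (a : ℤ)
  · rw [if_pos ⟨Int.natCast_nonneg b, h⟩]; simp
  · rw [if_neg (by tauto)]
    rw [Nat.choose_eq_zero_of_lt (by exact_mod_cast not_le.mp h)]
    simp

lemma Cz_zero_of_neg {n k : ℤ} (h : k < 0) : Cz n k = 0 := by
  unfold Cz; rw [if_neg]; omega

lemma Cz_zero_of_gt {n k : ℤ} (h : n < k) : Cz n k = 0 := by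
  unfold Cz; rw [if_neg]; omega

lemma Cz_pascal (n k : ℤ) (hn : 1 ≤ n) : Cz n k = Cz (n-1) k + Cz (n-1) (k-1) := by
  by_cases h0 : 0 ≤ k
  · by_cases hk : k ≤ n
    · rcases eq_or_lt_of_le h0 with h0' | h0'
      · subst_vars
        try rw [← h0']
        simp only [Cz]
        rw [if_pos ⟨le_refl 0, hk⟩, if_pos ⟨le_refl 0, by omega⟩, if_neg (by omega)]
        simp
      · -- 1 ≤ k ≤ n
        by_cases hkn : k ≤ n - 1
        · unfold Cz
          rw [if_pos ⟨h0, hk⟩, if_pos ⟨h0, hkn⟩, if_pos ⟨by omega, by omega⟩]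
          have e1 : n.toNat = (n-1).toNat + 1 := by omega
          have e2 : k.toNat = (k-1).toNat + 1 := by omega
          rw [e1, e2, Nat.choose_succ_succ']
          push_cast; ring
        · -- k = n
          have : k = n := by omega
          subst this
          unfold Cz
          rw [if_pos ⟨h0, le_refl _⟩, if_neg (by omega), if_pos ⟨by omega, by omega⟩]
          have : k.toNat = (k-1).toNat + 1 := by omega
          rw [this]
          simp [Nat.choose_self]
    · rw [Cz_zero_of_gt (by omega), Cz_zero_of_gt (by omega), Cz_zero_of_gt (by omega)]
      simp
  · rw [Cz_zero_of_neg (by omega), Cz_zero_of_neg (by omega), Cz_zero_of_neg (by omega)]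
    simp

def Dz (r k m : ℤ) : ℤ := Cz m r * Cz (m+1) k - Cz (m+1) (r+1) * Cz m (k-1)

lemma absorb (m j : ℤ) (h0 : 0 ≤ j) (hjm : j ≤ m) :
    ((j:ℚ)+1) * (Cz (m+1) (j+1) : ℚ) = ((m:ℚ)+1) * (Cz m j : ℚ) := by
  unfold Cz
  rw [if_pos ⟨by omega, by omega⟩, if_pos ⟨by omega, by omega⟩]
  have e1 : (m+1).toNat = m.toNat + 1 := by omega
  have e2 : (j+1).toNat = j.toNat + 1 := by omega
  rw [e1, e2]
  have key := Nat.add_one_mul_choose_eq m.toNat j.toNat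
  have key' : ((m.toNat + 1) * (m.toNat.choose j.toNat) : ℚ)
      = ((m.toNat + 1).choose (j.toNat + 1) : ℚ) * (j.toNat + 1 : ℚ) := by
    exact_mod_cast congrArg (Nat.cast (R := ℚ)) key
  have hm2 : m = (m.toNat : ℤ) := by omega
  have hj2 : j = (j.toNat : ℤ) := by omega
  rw [hm2, hj2]
  simp only [Int.toNat_natCast]
  push_cast
  linarith [key']

lemma ssytF_eq_D (r k m : ℤ) (h : k ≤ r + 1) : ssytF r k m = (Dz r k m : ℚ) := by
  by_cases hk : 0 ≤ k
  · by_cases hkr : k ≤ r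
    · by_cases hrm : r ≤ m
      · -- main case
        unfold ssytF Dz
        rw [if_pos ⟨hk, hkr, hrm⟩]
        have hr1 : ((r:ℚ)+1) ≠ 0 := by
          have : (0:ℚ) ≤ (r:ℚ) := by exact_mod_cast (by omega : (0:ℤ) ≤ r)
          linarith
        rw [div_eq_iff hr1]
        have hA := absorb m r (by omega) hrm
        by_cases hk0 : k = 0
        · subst hk0
          rw [show Cz m (0-1) = 0 from Cz_zero_of_neg (by omega)]
          push_cast
          ring
        · have hB := absorb m (k-1) (by omega) (by omega)
          have e : k - 1 + 1 = k := by ring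
          rw [e] at hB
          push_cast
          push_cast at hA hB
          linear_combination ((Cz m (k-1) : ℤ) : ℚ) * hA - ((Cz m r : ℤ) : ℚ) * hB
      · unfold ssytF Dz
        rw [if_neg (by tauto), show Cz m r = 0 from Cz_zero_of_gt (by omega),
          show Cz (m+1) (r+1) = 0 from Cz_zero_of_gt (by omega)]
        simp
    · -- k = r + 1
      have : k = r + 1 := by omega
      subst this
      unfold ssytF Dz
      rw [if_neg (by omega)]
      have e : r + 1 - 1 = r := by ring
      rw [e]
      push_cast
      ring
  · unfold ssytF Dz
    rw [if_neg (by omega), show Cz (m+1) k = 0 from Cz_zero_of_neg (by omega),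
      show Cz m (k-1) = 0 from Cz_zero_of_neg (by omega)]
    simp

lemma ssytF_pascal (r k m : ℤ) (hk : k ≤ r) (hm : 1 ≤ m) :
    ssytF r k m = ssytF r k (m-1) + ssytF (r-1) k (m-1)
      + ssytF r (k-1) (m-1) + ssytF (r-1) (k-1) (m-1) := by
  rw [ssytF_eq_D _ _ _ (by omega), ssytF_eq_D _ _ _ (by omega), ssytF_eq_D _ _ _ (by omega),
    ssytF_eq_D _ _ _ (by omega), ssytF_eq_D _ _ _ (by omega)]
  unfold Dz
  have e1 : m - 1 + 1 = m := by ring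
  have e2 : m + 1 - 1 = m := by ring
  have e3 : r - 1 + 1 = r := by ring
  rw [e1, e3]
  conv_lhs => rw [Cz_pascal m r hm, Cz_pascal (m+1) k (by omega),
    Cz_pascal (m+1) (r+1) (by omega), Cz_pascal m (k-1) hm]
  rw [e2]
  push_cast
  ring

lemma ssytF_zero_of_lt {r k m : ℤ} (h : r < k) : ssytF r k m = 0 := by
  unfold ssytF; rw [if_neg (by omega)]

lemma ssytF_zero_of_neg {r k m : ℤ} (h : k < 0) : ssytF r k m = 0 := by
  unfold ssytF; rw [if_neg (by omega)]

lemma ssytF_zero_of_mlt {r k m : ℤ} (h : m < r) : ssytF r k m = 0 := by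
  unfold ssytF; rw [if_neg (by omega)]

lemma nar_eq_ssytF (β l : ℕ) (hβ : 1 ≤ β) (hl : 1 ≤ l) :
    Nar β (l-1) = ssytF ((l:ℤ)-1) ((l:ℤ)-1) ((β:ℤ)-1) := by
  have hfl : l - 1 + 1 = l := Nat.sub_add_cancel hl
  have hβ0 : (β:ℚ) ≠ 0 := Nat.cast_ne_zero.mpr (by omega)
  have hl0 : (l:ℚ) ≠ 0 := Nat.cast_ne_zero.mpr (by omega)
  unfold Nar
  rw [if_neg (by omega), hfl]
  by_cases h : l ≤ β
  · unfold ssytF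
    rw [if_pos ⟨by omega, le_refl _, by push_cast; omega⟩]
    have e1 : ((l:ℤ) - 1) - ((l:ℤ) - 1) + 1 = 1 := by ring
    have e4 : ((β:ℤ)-1) + 1 = ((β:ℕ) : ℤ) := by ring
    rw [e1, e4]
    have e2 : ((l:ℤ)-1) = ((l-1:ℕ) : ℤ) := by omega
    have e3 : ((β:ℤ)-1) = ((β-1:ℕ) : ℤ) := by omega
    rw [e2, e3, Cz_natCast, Cz_natCast]
    have key := Nat.add_one_mul_choose_eq (β-1) (l-1)
    rw [Nat.sub_add_cancel hβ, hfl] at key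
    have key' : (β : ℚ) * ((β-1).choose (l-1) : ℚ) = (β.choose l : ℚ) * (l : ℚ) := by
      exact_mod_cast key
    have e5 : ((((l-1:ℕ):ℤ) : ℚ) + 1) = (l : ℚ) := by
      push_cast [Nat.cast_sub hl]; ring
    rw [e5]
    push_cast
    field_simp
    linear_combination (-(β.choose (l-1) : ℚ)) * key'
  · rw [Nat.choose_eq_zero_of_lt (by omega : β < l),
      ssytF_zero_of_mlt (by omega : ((β:ℤ)-1) < ((l:ℤ)-1))]
    simp

lemma ssytF_00 (M : ℤ) (h : 0 ≤ M) : ssytF 0 0 M = 1 := by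
  unfold ssytF
  rw [if_pos ⟨le_refl 0, le_refl 0, h⟩]
  unfold Cz
  rw [if_pos ⟨le_refl 0, h⟩, if_pos ⟨le_refl 0, by omega⟩]
  norm_num

lemma Nar_00 : Nar 0 0 = 1 := by simp [Nar]

lemma ssytF_m0 (R K : ℤ) : ssytF R K 0 = if R = 0 ∧ K = 0 then 1 else 0 := by
  by_cases h : R = 0 ∧ K = 0
  · obtain ⟨rfl, rfl⟩ := h
    rw [if_pos ⟨rfl, rfl⟩]
    exact ssytF_00 0 (le_refl 0)
  · rw [if_neg h]
    unfold ssytF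
    rw [if_neg (by omega)]

noncomputable def Rsum (r l m : ℤ) (β : ℕ) : ℚ :=
  ∑ e ∈ Finset.Icc 1 β, ∑ f ∈ Finset.Icc 1 e,
    Nar (e-1) (f-1) * ssytF (r - (f:ℤ)) (l - (f:ℤ)) (m - (e:ℤ))

lemma Rsum_zero_of_lt {r l : ℤ} (m : ℤ) (β : ℕ) (h : r < l) : Rsum r l m β = 0 := by
  unfold Rsum
  apply Finset.sum_eq_zero
  intro e _
  apply Finset.sum_eq_zero
  intro f _
  rw [ssytF_zero_of_lt (by omega), mul_zero]

lemma Rsum_rec (r l m : ℤ) (β : ℕ) (hlr : l ≤ r) (hβm : (β:ℤ) < m) :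
    Rsum r l m β = Rsum r l (m-1) β + Rsum (r-1) l (m-1) β
      + Rsum r (l-1) (m-1) β + Rsum (r-1) (l-1) (m-1) β := by
  unfold Rsum
  rw [← Finset.sum_add_distrib, ← Finset.sum_add_distrib, ← Finset.sum_add_distrib]
  apply Finset.sum_congr rfl
  intro e he
  rw [← Finset.sum_add_distrib, ← Finset.sum_add_distrib, ← Finset.sum_add_distrib]
  apply Finset.sum_congr rfl
  intro f hf
  rw [← mul_add, ← mul_add, ← mul_add]
  congr 1
  have heβ : (e:ℤ) ≤ (β:ℤ) := by exact_mod_cast (Finset.mem_Icc.mp he).2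
  rw [ssytF_pascal (r - f) (l - f) (m - e) (by omega) (by omega)]
  rw [show m - (e:ℤ) - 1 = m - 1 - (e:ℤ) by ring,
    show r - (f:ℤ) - 1 = r - 1 - (f:ℤ) by ring,
    show l - (f:ℤ) - 1 = l - 1 - (f:ℤ) by ring]

lemma Rsum_succ (r l m : ℤ) (β : ℕ) :
    Rsum r l m (β+1) = Rsum r l m β
      + ∑ f ∈ Finset.Icc 1 (β+1), Nar β (f-1) * ssytF (r - f) (l - f) (m - (β+1:ℕ)) := by
  unfold Rsum
  rw [Finset.sum_Icc_succ_top (by omega : 1 ≤ β + 1)]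
  norm_num

lemma Rsum_diag : ∀ (β : ℕ), 1 ≤ β → ∀ (r l : ℤ),
    Rsum r l (β:ℤ) β =
      if l ≤ r then ssytF r (l-1) ((β:ℤ)-1) + ssytF (r-1) (l-1) ((β:ℤ)-1) else 0 := by
  intro β
  induction β with
  | zero => omega
  | succ n ih =>
    intro _ r l
    by_cases hlr : l ≤ r
    swap
    · rw [Rsum_zero_of_lt _ _ (by omega), if_neg hlr]
    rw [if_pos hlr]
    rcases Nat.eq_or_lt_of_le (by omega : 1 ≤ n + 1) with h1 | h1
    · -- base case n = 0, β = 1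
      have hn : n = 0 := by omega
      subst hn
      unfold Rsum
      simp only [Finset.Icc_self, Finset.sum_singleton, Nat.cast_one]
      norm_num [Nar_00]
      rw [ssytF_m0, if_neg (by omega : ¬(r = 0 ∧ l - 1 = 0))]
    · -- inductive step: n ≥ 1
      have hn1 : 1 ≤ n := by omega
      have hc : ((n+1:ℕ):ℤ) = (n:ℤ) + 1 := by push_cast; ring
      rw [Rsum_succ, hc, Rsum_rec r l ((n:ℤ)+1) n hlr (by omega)]
      rw [show (n:ℤ) + 1 - 1 = (n:ℤ) by ring]
      rw [ih hn1 r l, ih hn1 (r-1) l, ih hn1 r (l-1), ih hn1 (r-1) (l-1)]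
      have term : ∀ f : ℕ, Nar n (f-1) * ssytF (r - f) (l - f) ((n:ℤ)+1 - ((n:ℤ)+1))
          = if (f:ℤ) = r ∧ (f:ℤ) = l then Nar n (f-1) else 0 := by
        intro f
        rw [show (n:ℤ)+1 - ((n:ℤ)+1) = 0 by ring, ssytF_m0]
        by_cases hf : (f:ℤ) = r ∧ (f:ℤ) = l
        · rw [if_pos (by omega : r - (f:ℤ) = 0 ∧ l - (f:ℤ) = 0), if_pos hf, mul_one]
        · rw [if_neg (by omega : ¬(r - (f:ℤ) = 0 ∧ l - (f:ℤ) = 0)), mul_zero, if_neg hf]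
      have hC : (∑ f ∈ Finset.Icc 1 (n+1), Nar n (f-1)
            * ssytF (r - f) (l - f) ((n:ℤ)+1 - ((n:ℤ)+1)))
          = if l = r ∧ 1 ≤ l then ssytF (l-1) (l-1) ((n:ℤ)-1) else 0 := by
        rw [Finset.sum_congr rfl (fun f _ => term f)]
        by_cases hl1 : l = r ∧ 1 ≤ l
        · have hiff : ∀ f:ℕ, ((f:ℤ) = r ∧ (f:ℤ) = l) ↔ f = l.toNat := by intro f; omega
          simp only [hiff]
          rw [Finset.sum_ite_eq' (Finset.Icc 1 (n+1)) l.toNat (fun f => Nar n (f-1))]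
          rw [if_pos hl1]
          by_cases hmem : l.toNat ∈ Finset.Icc 1 (n+1)
          · rw [if_pos hmem]
            have hmem' := Finset.mem_Icc.mp hmem
            rw [nar_eq_ssytF n l.toNat hn1 (by omega)]
            rw [show ((l.toNat:ℕ):ℤ) = l by omega]
          · rw [if_neg hmem]
            have hmem' : ¬(1 ≤ l.toNat ∧ l.toNat ≤ n+1) := by
              intro hcon; exact hmem (Finset.mem_Icc.mpr hcon)
            symm
            apply ssytF_zero_of_mlt
            omega
        · rw [if_neg hl1]
          apply Finset.sum_eq_zero
          intro f hf
          have := Finset.mem_Icc.mp hf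
          rw [if_neg (by omega)]
      rw [hC]
      rcases eq_or_lt_of_le hlr with heq | hlt
      · -- l = r
        subst heq
        rw [if_pos (le_refl l), if_neg (by omega : ¬ l ≤ l - 1),
          if_pos (by omega : l - 1 ≤ l), if_pos (le_refl (l-1))]
        by_cases hl : 1 ≤ l
        · rw [if_pos ⟨rfl, hl⟩]
          rw [ssytF_pascal l (l-1) (n:ℤ) (by omega) (by omega),
            ssytF_pascal (l-1) (l-1) (n:ℤ) (by omega) (by omega),
            show ssytF (l-1-1) (l-1) ((n:ℤ)-1) = 0 from ssytF_zero_of_lt (by omega)]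
          ring
        · rw [if_neg (by omega : ¬(l = l ∧ 1 ≤ l))]
          have z : ∀ R M : ℤ, ssytF R (l-1) M = 0 := fun R M => ssytF_zero_of_neg (by omega)
          have z2 : ∀ R M : ℤ, ssytF R (l-1-1) M = 0 := fun R M => ssytF_zero_of_neg (by omega)
          simp only [z, z2]
          norm_num
      · -- l < r
        rw [if_pos hlr, if_pos (by omega : l ≤ r - 1), if_pos (by omega : l - 1 ≤ r),
          if_pos (by omega : l - 1 ≤ r - 1), if_neg (by omega : ¬(l = r ∧ 1 ≤ l))]
        rw [ssytF_pascal r (l-1) (n:ℤ) (by omega) (by omega),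
          ssytF_pascal (r-1) (l-1) (n:ℤ) (by omega) (by omega)]
        ring

def TCond {r l m : ℕ} (p : (Fin r → Fin m) × (Fin l → Fin m)) : Prop :=
  StrictMono p.1 ∧ StrictMono p.2 ∧ ∀ (i : Fin r) (j : Fin l), (i : ℕ) = (j : ℕ) → p.1 i ≤ p.2 j

def shr {k m : ℕ} (f : Fin k → Fin (m+1)) (h : ∀ i, f i ≠ Fin.last m) : Fin k → Fin m :=
  fun i => (f i).castPred (h i)

def grow {k m : ℕ} (f : Fin k → Fin m) : Fin k → Fin (m+1) := fun i => (f i).castSucc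

lemma grow_strictMono {k m : ℕ} {f : Fin k → Fin m} (hf : StrictMono f) :
    StrictMono (grow f) := Fin.strictMono_castSucc.comp hf

lemma shr_strictMono {k m : ℕ} {f : Fin k → Fin (m+1)} (h : ∀ i, f i ≠ Fin.last m)
    (hf : StrictMono f) : StrictMono (shr f h) := by
  intro a b hab
  exact Fin.castPred_lt_castPred_iff.mpr (hf hab)

lemma grow_ne_last {k m : ℕ} (f : Fin k → Fin m) (i : Fin k) : grow f i ≠ Fin.last m :=
  ne_of_lt (Fin.castSucc_lt_last _)

lemma shr_grow {k m : ℕ} (f : Fin k → Fin m) (h : ∀ i, grow f i ≠ Fin.last m) :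
    shr (grow f) h = f := by
  funext i; simp [shr, grow, Fin.castPred_castSucc]

lemma grow_shr {k m : ℕ} (f : Fin k → Fin (m+1)) (h : ∀ i, f i ≠ Fin.last m) :
    grow (shr f h) = f := by
  funext i; simp [shr, grow, Fin.castSucc_castPred]

lemma last_eq_of_exists {k m : ℕ} {f : Fin (k+1) → Fin (m+1)} (hf : StrictMono f)
    (h : ∃ i, f i = Fin.last m) : f (Fin.last k) = Fin.last m := by
  obtain ⟨i, hi⟩ := h
  have h2 := hf.monotone (Fin.le_last i)
  rw [hi] at h2
  exact le_antisymm (Fin.le_last _) h2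

lemma init_ne_last {k m : ℕ} {f : Fin (k+1) → Fin (m+1)} (hf : StrictMono f)
    (hl : f (Fin.last k) = Fin.last m) (i : Fin k) : f i.castSucc ≠ Fin.last m := by
  have h2 : f i.castSucc < f (Fin.last k) := hf (Fin.castSucc_lt_last i)
  rw [hl] at h2; exact ne_of_lt h2

lemma snoc_strictMono {k m : ℕ} {g : Fin k → Fin (m+1)} (hg : StrictMono g)
    (ht : ∀ i, g i < Fin.last m) :
    StrictMono (Fin.snoc g (Fin.last m) : Fin (k+1) → Fin (m+1)) := by
  intro a b hab
  rcases Fin.eq_castSucc_or_eq_last b with ⟨b', rfl⟩ | rfl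
  · rcases Fin.eq_castSucc_or_eq_last a with ⟨a', rfl⟩ | rfl
    · rw [Fin.snoc_castSucc, Fin.snoc_castSucc]
      exact hg (Fin.castSucc_lt_castSucc_iff.mp hab)
    · exact absurd hab (not_lt.mpr (le_of_lt (Fin.castSucc_lt_last b')))
  · rcases Fin.eq_castSucc_or_eq_last a with ⟨a', rfl⟩ | rfl
    · rw [Fin.snoc_castSucc, Fin.snoc_last]; exact ht a'
    · exact absurd hab (lt_irrefl _)

section CaseEquivs

variable {r l m : ℕ} {E : (Fin l → Fin (m+1)) → Prop} {E' : (Fin l → Fin m) → Prop}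

def equivFF (hE : ∀ (b : Fin l → Fin (m+1)) (h : ∀ j, b j ≠ Fin.last m), (E' (shr b h) ↔ E b)) :
    {p : (Fin r → Fin (m+1)) × (Fin l → Fin (m+1)) //
      (TCond p ∧ E p.2) ∧ ¬(∃ i, p.1 i = Fin.last m) ∧ ¬(∃ j, p.2 j = Fin.last m)} ≃
    {q : (Fin r → Fin m) × (Fin l → Fin m) // TCond q ∧ E' q.2} where
  toFun p := ⟨(shr p.1.1 (fun i hi => p.2.2.1 ⟨i, hi⟩), shr p.1.2 (fun j hj => p.2.2.2 ⟨j, hj⟩)), by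
    obtain ⟨⟨⟨h1, h2, h3⟩, hEp⟩, hQa, hQb⟩ := p.2
    refine ⟨⟨shr_strictMono (fun i hi => hQa ⟨i, hi⟩) h1, shr_strictMono (fun j hj => hQb ⟨j, hj⟩) h2, ?_⟩, (hE _ (fun j hj => hQb ⟨j, hj⟩)).mpr hEp⟩
    intro i j hij
    have h4 := h3 i j hij
    rw [Fin.le_def] at h4 ⊢
    exact h4⟩
  invFun q := ⟨(grow q.1.1, grow q.1.2), by
    obtain ⟨⟨h1, h2, h3⟩, hEq⟩ := q.2
    refine ⟨⟨⟨grow_strictMono h1, grow_strictMono h2, ?_⟩, ?_⟩, ?_, ?_⟩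
    · intro i j hij
      exact Fin.castSucc_le_castSucc_iff.mpr (h3 i j hij)
    · exact (hE _ (grow_ne_last _)).mp (by rw [shr_grow]; exact hEq)
    · rintro ⟨i, hi⟩; exact grow_ne_last _ i hi
    · rintro ⟨j, hj⟩; exact grow_ne_last _ j hj⟩
  left_inv p := by
    apply Subtype.ext
    refine Prod.ext ?_ ?_
    · apply grow_shr
      intro i hi; exact p.2.2.1 ⟨i, hi⟩
    · apply grow_shr
      intro j hj; exact p.2.2.2 ⟨j, hj⟩
  right_inv q := by
    apply Subtype.ext
    refine Prod.ext ?_ ?_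
    · apply shr_grow
      exact grow_ne_last _
    · apply shr_grow
      exact grow_ne_last _

def equivTF (hlr : l ≤ r)
    (hE : ∀ (b : Fin l → Fin (m+1)) (h : ∀ j, b j ≠ Fin.last m), (E' (shr b h) ↔ E b)) :
    {p : (Fin (r+1) → Fin (m+1)) × (Fin l → Fin (m+1)) //
      (TCond p ∧ E p.2) ∧ (∃ i, p.1 i = Fin.last m) ∧ ¬(∃ j, p.2 j = Fin.last m)} ≃
    {q : (Fin r → Fin m) × (Fin l → Fin m) // TCond q ∧ E' q.2} where
  toFun p := ⟨(shr (fun i => p.1.1 i.castSucc)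
      (init_ne_last p.2.1.1.1 (last_eq_of_exists p.2.1.1.1 p.2.2.1)),
      shr p.1.2 (fun j hj => p.2.2.2 ⟨j, hj⟩)), by
    obtain ⟨⟨⟨h1, h2, h3⟩, hEp⟩, hQa, hQb⟩ := p.2
    have hlast := last_eq_of_exists h1 hQa
    refine ⟨⟨shr_strictMono (init_ne_last h1 hlast) (h1.comp Fin.strictMono_castSucc),
      shr_strictMono (fun j hj => hQb ⟨j, hj⟩) h2, ?_⟩,
      (hE _ (fun j hj => hQb ⟨j, hj⟩)).mpr hEp⟩
    intro i j hij
    have h4 := h3 i.castSucc j (by simpa using hij)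
    rw [Fin.le_def] at h4 ⊢
    exact h4⟩
  invFun q := ⟨(Fin.snoc (grow q.1.1) (Fin.last m), grow q.1.2), by
    obtain ⟨⟨h1, h2, h3⟩, hEq⟩ := q.2
    refine ⟨⟨⟨snoc_strictMono (grow_strictMono h1) (fun i => Fin.castSucc_lt_last _),
      grow_strictMono h2, ?_⟩, ?_⟩, ⟨Fin.last r, by simp⟩, ?_⟩
    · intro i j hij
      rcases Fin.eq_castSucc_or_eq_last i with ⟨i', rfl⟩ | rfl
      · dsimp only
        rw [Fin.snoc_castSucc]
        have h4 := h3 i' j (by simpa using hij)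
        rw [Fin.le_def] at h4 ⊢
        exact h4
      · exfalso
        have hj := j.isLt
        have h5 : (Fin.last r : ℕ) = (j : ℕ) := hij
        simp only [Fin.val_last] at h5
        omega
    · exact (hE _ (grow_ne_last _)).mp (by rw [shr_grow]; exact hEq)
    · rintro ⟨j, hj⟩; exact grow_ne_last _ j hj⟩
  left_inv p := by
    apply Subtype.ext
    obtain ⟨⟨⟨h1, h2, h3⟩, hEp⟩, hQa, hQb⟩ := p.2
    have hlast := last_eq_of_exists h1 hQa
    refine Prod.ext ?_ ?_
    · funext i
      dsimp only
      rcases Fin.eq_castSucc_or_eq_last i with ⟨i', rfl⟩ | rfl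
      · simp only [Fin.snoc_castSucc, grow, shr, Fin.castSucc_castPred]
      · simp only [Fin.snoc_last]
        exact hlast.symm
    · apply grow_shr
      intro j hj; exact p.2.2.2 ⟨j, hj⟩
  right_inv q := by
    apply Subtype.ext
    refine Prod.ext ?_ ?_
    · funext i
      simp [shr, grow]
      
    · apply shr_grow
      exact grow_ne_last _

end CaseEquivs

section CaseEquivs2

variable {r l m : ℕ} {E : (Fin (l+1) → Fin (m+1)) → Prop} {E' : (Fin l → Fin m) → Prop}

def equivFT
    (hE : ∀ (b : Fin (l+1) → Fin (m+1)), StrictMono b → b (Fin.last l) = Fin.last m →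
      ∀ (h : ∀ j : Fin l, b j.castSucc ≠ Fin.last m), (E' (shr (fun j => b j.castSucc) h) ↔ E b)) :
    {p : (Fin r → Fin (m+1)) × (Fin (l+1) → Fin (m+1)) //
      (TCond p ∧ E p.2) ∧ ¬(∃ i, p.1 i = Fin.last m) ∧ (∃ j, p.2 j = Fin.last m)} ≃
    {q : (Fin r → Fin m) × (Fin l → Fin m) // TCond q ∧ E' q.2} where
  toFun p := ⟨(shr p.1.1 (fun i hi => p.2.2.1 ⟨i, hi⟩),
      shr (fun j => p.1.2 j.castSucc)
        (init_ne_last p.2.1.1.2.1 (last_eq_of_exists p.2.1.1.2.1 p.2.2.2))), by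
    obtain ⟨⟨⟨h1, h2, h3⟩, hEp⟩, hQa, hQb⟩ := p.2
    have hlast := last_eq_of_exists h2 hQb
    refine ⟨⟨shr_strictMono (fun i hi => hQa ⟨i, hi⟩) h1,
      shr_strictMono (init_ne_last h2 hlast) (h2.comp Fin.strictMono_castSucc), ?_⟩,
      (hE _ h2 hlast (init_ne_last h2 hlast)).mpr hEp⟩
    intro i j hij
    have h4 := h3 i j.castSucc (by simpa using hij)
    rw [Fin.le_def] at h4 ⊢
    exact h4⟩
  invFun q := ⟨(grow q.1.1, Fin.snoc (grow q.1.2) (Fin.last m)), by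
    obtain ⟨⟨h1, h2, h3⟩, hEq⟩ := q.2
    refine ⟨⟨⟨grow_strictMono h1,
      snoc_strictMono (grow_strictMono h2) (fun i => Fin.castSucc_lt_last _), ?_⟩, ?_⟩,
      ?_, ⟨Fin.last l, by simp⟩⟩
    · intro i j hij
      rcases Fin.eq_castSucc_or_eq_last j with ⟨j', rfl⟩ | rfl
      · dsimp only
        rw [Fin.snoc_castSucc]
        have h4 := h3 i j' (by simpa using hij)
        rw [Fin.le_def] at h4 ⊢
        exact h4
      · dsimp only
        rw [Fin.snoc_last]
        exact Fin.le_last _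
    · refine (hE _ (snoc_strictMono (grow_strictMono h2) (fun i => Fin.castSucc_lt_last _))
        (by simp) (fun j => by rw [Fin.snoc_castSucc]; exact grow_ne_last _ j)).mp ?_
      convert hEq using 1
      funext j
      simp [shr, grow]
    · rintro ⟨i, hi⟩; exact grow_ne_last _ i hi⟩
  left_inv p := by
    apply Subtype.ext
    obtain ⟨⟨⟨h1, h2, h3⟩, hEp⟩, hQa, hQb⟩ := p.2
    have hlast := last_eq_of_exists h2 hQb
    refine Prod.ext ?_ ?_
    · apply grow_shr
      intro i hi; exact p.2.2.1 ⟨i, hi⟩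
    · funext j
      dsimp only
      rcases Fin.eq_castSucc_or_eq_last j with ⟨j', rfl⟩ | rfl
      · simp only [Fin.snoc_castSucc, grow, shr, Fin.castSucc_castPred]
      · simp only [Fin.snoc_last]
        exact hlast.symm
  right_inv q := by
    apply Subtype.ext
    refine Prod.ext ?_ ?_
    · apply shr_grow
      exact grow_ne_last _
    · funext j
      simp [shr, grow]

def equivTT (hlr : l ≤ r)
    (hE : ∀ (b : Fin (l+1) → Fin (m+1)), StrictMono b → b (Fin.last l) = Fin.last m →
      ∀ (h : ∀ j : Fin l, b j.castSucc ≠ Fin.last m), (E' (shr (fun j => b j.castSucc) h) ↔ E b)) :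
    {p : (Fin (r+1) → Fin (m+1)) × (Fin (l+1) → Fin (m+1)) //
      (TCond p ∧ E p.2) ∧ (∃ i, p.1 i = Fin.last m) ∧ (∃ j, p.2 j = Fin.last m)} ≃
    {q : (Fin r → Fin m) × (Fin l → Fin m) // TCond q ∧ E' q.2} where
  toFun p := ⟨(shr (fun i => p.1.1 i.castSucc)
      (init_ne_last p.2.1.1.1 (last_eq_of_exists p.2.1.1.1 p.2.2.1)),
      shr (fun j => p.1.2 j.castSucc)
        (init_ne_last p.2.1.1.2.1 (last_eq_of_exists p.2.1.1.2.1 p.2.2.2))), by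
    obtain ⟨⟨⟨h1, h2, h3⟩, hEp⟩, hQa, hQb⟩ := p.2
    have hlasta := last_eq_of_exists h1 hQa
    have hlastb := last_eq_of_exists h2 hQb
    refine ⟨⟨shr_strictMono (init_ne_last h1 hlasta) (h1.comp Fin.strictMono_castSucc),
      shr_strictMono (init_ne_last h2 hlastb) (h2.comp Fin.strictMono_castSucc), ?_⟩,
      (hE _ h2 hlastb (init_ne_last h2 hlastb)).mpr hEp⟩
    intro i j hij
    have h4 := h3 i.castSucc j.castSucc (by simpa using hij)
    rw [Fin.le_def] at h4 ⊢
    exact h4⟩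
  invFun q := ⟨(Fin.snoc (grow q.1.1) (Fin.last m), Fin.snoc (grow q.1.2) (Fin.last m)), by
    obtain ⟨⟨h1, h2, h3⟩, hEq⟩ := q.2
    refine ⟨⟨⟨snoc_strictMono (grow_strictMono h1) (fun i => Fin.castSucc_lt_last _),
      snoc_strictMono (grow_strictMono h2) (fun i => Fin.castSucc_lt_last _), ?_⟩, ?_⟩,
      ⟨Fin.last r, by simp⟩, ⟨Fin.last l, by simp⟩⟩
    · intro i j hij
      rcases Fin.eq_castSucc_or_eq_last j with ⟨j', rfl⟩ | rfl
      · have hij' : (i : ℕ) = (j' : ℕ) := by simpa using hij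
        have hir : (i : ℕ) < r := by
          have := j'.isLt
          omega
        rcases Fin.eq_castSucc_or_eq_last i with ⟨i', rfl⟩ | rfl
        · dsimp only
          rw [Fin.snoc_castSucc, Fin.snoc_castSucc]
          have h4 := h3 i' j' (by simpa using hij')
          rw [Fin.le_def] at h4 ⊢
          exact h4
        · exfalso
          simp only [Fin.val_last] at hir
          omega
      · dsimp only
        rw [Fin.snoc_last]
        exact Fin.le_last _
    · refine (hE _ (snoc_strictMono (grow_strictMono h2) (fun i => Fin.castSucc_lt_last _))
        (by simp) (fun j => by rw [Fin.snoc_castSucc]; exact grow_ne_last _ j)).mp ?_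
      convert hEq using 1
      funext j
      simp [shr, grow]⟩
  left_inv p := by
    apply Subtype.ext
    obtain ⟨⟨⟨h1, h2, h3⟩, hEp⟩, hQa, hQb⟩ := p.2
    have hlasta := last_eq_of_exists h1 hQa
    have hlastb := last_eq_of_exists h2 hQb
    refine Prod.ext ?_ ?_
    · funext i
      dsimp only
      rcases Fin.eq_castSucc_or_eq_last i with ⟨i', rfl⟩ | rfl
      · simp only [Fin.snoc_castSucc, grow, shr, Fin.castSucc_castPred]
      · simp only [Fin.snoc_last]
        exact hlasta.symm
    · funext j
      dsimp only
      rcases Fin.eq_castSucc_or_eq_last j with ⟨j', rfl⟩ | rfl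
      · simp only [Fin.snoc_castSucc, grow, shr, Fin.castSucc_castPred]
      · simp only [Fin.snoc_last]
        exact hlastb.symm
  right_inv q := by
    apply Subtype.ext
    refine Prod.ext ?_ ?_
    · funext i
      simp [shr, grow]
      
    · funext j
      simp [shr, grow]

end CaseEquivs2

noncomputable def gN (r l m : ℕ) : ℕ :=
  Nat.card {p : (Fin r → Fin m) × (Fin l → Fin m) // TCond p}

noncomputable def fN (r l m β : ℕ) : ℕ :=
  Nat.card {p : (Fin r → Fin m) × (Fin l → Fin m) // TCond p ∧ ∃ j, ((p.2 j : ℕ) + 1 = β)}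

lemma card_partition {α : Type*} [Fintype α] (P Q : α → Prop) :
    Nat.card {x // P x} = Nat.card {x // P x ∧ Q x} + Nat.card {x // P x ∧ ¬Q x} := by
  classical
  rw [Nat.card_eq_fintype_card, Nat.card_eq_fintype_card, Nat.card_eq_fintype_card,
    Fintype.card_subtype, Fintype.card_subtype, Fintype.card_subtype,
    ← Finset.filter_filter, ← Finset.filter_filter]
  exact (Finset.card_filter_add_card_filter_not (fun x => Q x)).symm

lemma card_true (r l m : ℕ) :
    Nat.card {q : (Fin r → Fin m) × (Fin l → Fin m) // TCond q ∧ True} = gN r l m :=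
  Nat.card_congr (Equiv.subtypeEquivRight (fun q => by tauto))

lemma hshrβ {l m β : ℕ} :
    ∀ (b : Fin l → Fin (m+1)) (h : ∀ j, b j ≠ Fin.last m),
      ((∃ j, (((shr b h) j : ℕ) + 1 = β)) ↔ (∃ j, ((b j : ℕ) + 1 = β))) := by
  intro b h
  constructor <;> rintro ⟨j, hj⟩ <;> exact ⟨j, by simpa [shr] using hj⟩

lemma hdropβ {l m β : ℕ} (hβm : β ≤ m) :
    ∀ (b : Fin (l+1) → Fin (m+1)), StrictMono b → b (Fin.last l) = Fin.last m →
      ∀ (h : ∀ j : Fin l, b j.castSucc ≠ Fin.last m),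
      ((∃ j, (((shr (fun j => b j.castSucc) h) j : ℕ) + 1 = β)) ↔ (∃ j, ((b j : ℕ) + 1 = β))) := by
  intro b hmono hlast h
  constructor
  · rintro ⟨j, hj⟩
    exact ⟨j.castSucc, by simpa [shr] using hj⟩
  · rintro ⟨j, hj⟩
    rcases Fin.eq_castSucc_or_eq_last j with ⟨j', rfl⟩ | rfl
    · exact ⟨j', by simpa [shr] using hj⟩
    · rw [hlast] at hj
      simp only [Fin.val_last] at hj
      omega

lemma fN_recS (r l m β : ℕ) (hlr : l ≤ r) (hβm : β ≤ m) :
    fN (r+1) (l+1) (m+1) β = fN (r+1) (l+1) m β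
      + (if l + 1 ≤ r then fN r (l+1) m β else 0) + fN (r+1) l m β + fN r l m β := by
  classical
  have h1 := card_partition
    (fun p : (Fin (r+1) → Fin (m+1)) × (Fin (l+1) → Fin (m+1)) =>
      TCond p ∧ ∃ j, ((p.2 j : ℕ) + 1 = β))
    (fun p => ∃ i, p.1 i = Fin.last m)
  have h2 := card_partition
    (fun p : (Fin (r+1) → Fin (m+1)) × (Fin (l+1) → Fin (m+1)) =>
      (TCond p ∧ ∃ j, ((p.2 j : ℕ) + 1 = β)) ∧ ∃ i, p.1 i = Fin.last m)
    (fun p => ∃ j, p.2 j = Fin.last m)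
  have h3 := card_partition
    (fun p : (Fin (r+1) → Fin (m+1)) × (Fin (l+1) → Fin (m+1)) =>
      (TCond p ∧ ∃ j, ((p.2 j : ℕ) + 1 = β)) ∧ ¬∃ i, p.1 i = Fin.last m)
    (fun p => ∃ j, p.2 j = Fin.last m)
  -- TT piece
  have cTT : Nat.card {p : (Fin (r+1) → Fin (m+1)) × (Fin (l+1) → Fin (m+1)) //
      ((TCond p ∧ ∃ j, ((p.2 j : ℕ) + 1 = β)) ∧ (∃ i, p.1 i = Fin.last m)) ∧
        ∃ j, p.2 j = Fin.last m} = fN r l m β := by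
    refine Nat.card_congr (Equiv.trans (Equiv.subtypeEquivRight (fun p => ?_))
      (equivTT (E := fun b => ∃ j, ((b j : ℕ) + 1 = β)) (E' := fun b => ∃ j, ((b j : ℕ) + 1 = β))
        hlr (hdropβ hβm)))
    tauto
  -- FT piece
  have cFT : Nat.card {p : (Fin (r+1) → Fin (m+1)) × (Fin (l+1) → Fin (m+1)) //
      ((TCond p ∧ ∃ j, ((p.2 j : ℕ) + 1 = β)) ∧ ¬(∃ i, p.1 i = Fin.last m)) ∧
        ∃ j, p.2 j = Fin.last m} = fN (r+1) l m β := by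
    refine Nat.card_congr (Equiv.trans (Equiv.subtypeEquivRight (fun p => ?_))
      (equivFT (E := fun b => ∃ j, ((b j : ℕ) + 1 = β)) (E' := fun b => ∃ j, ((b j : ℕ) + 1 = β))
        (hdropβ hβm)))
    tauto
  -- FF piece
  have cFF : Nat.card {p : (Fin (r+1) → Fin (m+1)) × (Fin (l+1) → Fin (m+1)) //
      ((TCond p ∧ ∃ j, ((p.2 j : ℕ) + 1 = β)) ∧ ¬(∃ i, p.1 i = Fin.last m)) ∧
        ¬∃ j, p.2 j = Fin.last m} = fN (r+1) (l+1) m β := by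
    refine Nat.card_congr (Equiv.trans (Equiv.subtypeEquivRight (fun p => ?_))
      (equivFF (E := fun b => ∃ j, ((b j : ℕ) + 1 = β)) (E' := fun b => ∃ j, ((b j : ℕ) + 1 = β))
        hshrβ))
    tauto
  -- TF piece
  have cTF : Nat.card {p : (Fin (r+1) → Fin (m+1)) × (Fin (l+1) → Fin (m+1)) //
      ((TCond p ∧ ∃ j, ((p.2 j : ℕ) + 1 = β)) ∧ (∃ i, p.1 i = Fin.last m)) ∧
        ¬∃ j, p.2 j = Fin.last m} = if l + 1 ≤ r then fN r (l+1) m β else 0 := by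
    by_cases hif : l + 1 ≤ r
    · rw [if_pos hif]
      refine Nat.card_congr (Equiv.trans (Equiv.subtypeEquivRight (fun p => ?_))
        (equivTF (E := fun b => ∃ j, ((b j : ℕ) + 1 = β)) (E' := fun b => ∃ j, ((b j : ℕ) + 1 = β))
          hif hshrβ))
      tauto
    · rw [if_neg hif]
      have hrl : r = l := by omega
      subst hrl
      have : IsEmpty {p : (Fin (r+1) → Fin (m+1)) × (Fin (r+1) → Fin (m+1)) //
          ((TCond p ∧ ∃ j, ((p.2 j : ℕ) + 1 = β)) ∧ (∃ i, p.1 i = Fin.last m)) ∧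
            ¬∃ j, p.2 j = Fin.last m} := by
        constructor
        rintro ⟨p, ⟨⟨⟨h1', h2', h3'⟩, _⟩, hQa⟩, hQb⟩
        have hlast := last_eq_of_exists h1' hQa
        have hcr := h3' (Fin.last r) (Fin.last r) rfl
        rw [hlast] at hcr
        exact hQb ⟨Fin.last r, le_antisymm (Fin.le_last _) hcr⟩
      exact Nat.card_of_isEmpty
  have h1' : fN (r+1) (l+1) (m+1) β = _ := h1
  rw [h1', h2, h3, cTT, cTF, cFT, cFF]
  omega


lemma gN_recS (r l m : ℕ) (hlr : l ≤ r) :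
    gN (r+1) (l+1) (m+1) = gN (r+1) (l+1) m
      + (if l + 1 ≤ r then gN r (l+1) m else 0) + gN (r+1) l m + gN r l m := by
  classical
  have h1 := card_partition
    (fun p : (Fin (r+1) → Fin (m+1)) × (Fin (l+1) → Fin (m+1)) => TCond p)
    (fun p => ∃ i, p.1 i = Fin.last m)
  have h2 := card_partition
    (fun p : (Fin (r+1) → Fin (m+1)) × (Fin (l+1) → Fin (m+1)) =>
      TCond p ∧ ∃ i, p.1 i = Fin.last m)
    (fun p => ∃ j, p.2 j = Fin.last m)
  have h3 := card_partition
    (fun p : (Fin (r+1) → Fin (m+1)) × (Fin (l+1) → Fin (m+1)) =>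
      TCond p ∧ ¬∃ i, p.1 i = Fin.last m)
    (fun p => ∃ j, p.2 j = Fin.last m)
  have cTT : Nat.card {p : (Fin (r+1) → Fin (m+1)) × (Fin (l+1) → Fin (m+1)) //
      (TCond p ∧ (∃ i, p.1 i = Fin.last m)) ∧ ∃ j, p.2 j = Fin.last m} = gN r l m := by
    rw [← card_true]
    refine Nat.card_congr (Equiv.trans (Equiv.subtypeEquivRight (fun p => ?_))
      (equivTT (E := fun _ => True) (E' := fun _ => True) hlr (fun _ _ _ _ => Iff.rfl)))
    tauto
  have cFT : Nat.card {p : (Fin (r+1) → Fin (m+1)) × (Fin (l+1) → Fin (m+1)) //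
      (TCond p ∧ ¬(∃ i, p.1 i = Fin.last m)) ∧ ∃ j, p.2 j = Fin.last m} = gN (r+1) l m := by
    rw [← card_true]
    refine Nat.card_congr (Equiv.trans (Equiv.subtypeEquivRight (fun p => ?_))
      (equivFT (E := fun _ => True) (E' := fun _ => True) (fun _ _ _ _ => Iff.rfl)))
    tauto
  have cFF : Nat.card {p : (Fin (r+1) → Fin (m+1)) × (Fin (l+1) → Fin (m+1)) //
      (TCond p ∧ ¬(∃ i, p.1 i = Fin.last m)) ∧ ¬∃ j, p.2 j = Fin.last m}
      = gN (r+1) (l+1) m := by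
    rw [← card_true]
    refine Nat.card_congr (Equiv.trans (Equiv.subtypeEquivRight (fun p => ?_))
      (equivFF (E := fun _ => True) (E' := fun _ => True) (fun _ _ => Iff.rfl)))
    tauto
  have cTF : Nat.card {p : (Fin (r+1) → Fin (m+1)) × (Fin (l+1) → Fin (m+1)) //
      (TCond p ∧ (∃ i, p.1 i = Fin.last m)) ∧ ¬∃ j, p.2 j = Fin.last m}
      = if l + 1 ≤ r then gN r (l+1) m else 0 := by
    by_cases hif : l + 1 ≤ r
    · rw [if_pos hif, ← card_true]
      refine Nat.card_congr (Equiv.trans (Equiv.subtypeEquivRight (fun p => ?_))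
        (equivTF (E := fun _ => True) (E' := fun _ => True) hif (fun _ _ => Iff.rfl)))
      tauto
    · rw [if_neg hif]
      have hrl : r = l := by omega
      subst hrl
      have : IsEmpty {p : (Fin (r+1) → Fin (m+1)) × (Fin (r+1) → Fin (m+1)) //
          (TCond p ∧ (∃ i, p.1 i = Fin.last m)) ∧ ¬∃ j, p.2 j = Fin.last m} := by
        constructor
        rintro ⟨p, ⟨⟨h1', h2', h3'⟩, hQa⟩, hQb⟩
        have hlast := last_eq_of_exists h1' hQa
        have hcr := h3' (Fin.last r) (Fin.last r) rfl
        rw [hlast] at hcr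
        exact hQb ⟨Fin.last r, le_antisymm (Fin.le_last _) hcr⟩
      exact Nat.card_of_isEmpty
  have h1' : gN (r+1) (l+1) (m+1) = _ := h1
  rw [h1', h2, h3, cTT, cTF, cFT, cFF]
  omega

lemma gN_00 (m : ℕ) : gN 0 0 m = 1 := by
  unfold gN
  haveI hne : Nonempty {p : (Fin 0 → Fin m) × (Fin 0 → Fin m) // TCond p} :=
    ⟨⟨(fun i => i.elim0, fun j => j.elim0),
      fun a b h => a.elim0, fun a b h => a.elim0, fun i j _ => i.elim0⟩⟩
  haveI : Subsingleton {p : (Fin 0 → Fin m) × (Fin 0 → Fin m) // TCond p} := by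
    constructor
    rintro ⟨⟨a, b⟩, _⟩ ⟨⟨c, d⟩, _⟩
    apply Subtype.ext
    refine Prod.ext ?_ ?_ <;> funext x <;> exact x.elim0
  exact Nat.card_unique

lemma gN_m0 (r l : ℕ) : gN (r+1) l 0 = 0 := by
  unfold gN
  haveI : IsEmpty {p : (Fin (r+1) → Fin 0) × (Fin l → Fin 0) // TCond p} :=
    ⟨fun p => (p.1.1 ⟨0, Nat.succ_pos r⟩).elim0⟩
  exact Nat.card_of_isEmpty

lemma fN_l0 (r m β : ℕ) : fN r 0 m β = 0 := by
  unfold fN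
  haveI : IsEmpty {p : (Fin r → Fin m) × (Fin 0 → Fin m) //
      TCond p ∧ ∃ j, ((p.2 j : ℕ) + 1 = β)} := by
    constructor
    rintro ⟨p, _, j, _⟩
    exact j.elim0
  exact Nat.card_of_isEmpty

lemma gN_rec0 (r m : ℕ) : gN (r+1) 0 (m+1) = gN (r+1) 0 m + gN r 0 m := by
  classical
  have h1 := card_partition
    (fun p : (Fin (r+1) → Fin (m+1)) × (Fin 0 → Fin (m+1)) => TCond p)
    (fun p => ∃ i, p.1 i = Fin.last m)
  have cT : Nat.card {p : (Fin (r+1) → Fin (m+1)) × (Fin 0 → Fin (m+1)) //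
      TCond p ∧ (∃ i, p.1 i = Fin.last m)} = gN r 0 m := by
    rw [← card_true]
    refine Nat.card_congr (Equiv.trans (Equiv.subtypeEquivRight (fun p => ?_))
      (equivTF (E := fun _ => True) (E' := fun _ => True) (Nat.zero_le r) (fun _ _ => Iff.rfl)))
    constructor
    · rintro ⟨h, ha⟩
      exact ⟨⟨h, trivial⟩, ha, fun hc => hc.choose.elim0⟩
    · rintro ⟨⟨h, _⟩, ha, _⟩
      exact ⟨h, ha⟩
  have cF : Nat.card {p : (Fin (r+1) → Fin (m+1)) × (Fin 0 → Fin (m+1)) //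
      TCond p ∧ ¬(∃ i, p.1 i = Fin.last m)} = gN (r+1) 0 m := by
    rw [← card_true]
    refine Nat.card_congr (Equiv.trans (Equiv.subtypeEquivRight (fun p => ?_))
      (equivFF (E := fun _ => True) (E' := fun _ => True) (fun _ _ => Iff.rfl)))
    constructor
    · rintro ⟨h, ha⟩
      exact ⟨⟨h, trivial⟩, ha, fun hc => hc.choose.elim0⟩
    · rintro ⟨⟨h, _⟩, ha, _⟩
      exact ⟨h, ha⟩
  have h1' : gN (r+1) 0 (m+1) = _ := h1
  rw [h1', cT, cF]
  omega

lemma fN_base (r l b : ℕ) (hlr : l ≤ r) :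
    fN (r+1) (l+1) (b+1) (b+1) = gN (r+1) l b + gN r l b := by
  classical
  have e0 : fN (r+1) (l+1) (b+1) (b+1) = Nat.card
      {p : (Fin (r+1) → Fin (b+1)) × (Fin (l+1) → Fin (b+1)) //
        TCond p ∧ ∃ j, p.2 j = Fin.last b} := by
    apply Nat.card_congr
    apply Equiv.subtypeEquivRight
    intro p
    constructor
    · rintro ⟨h, j, hj⟩
      refine ⟨h, j, ?_⟩
      apply Fin.ext
      simp only [Fin.val_last]
      omega
    · rintro ⟨h, j, hj⟩
      refine ⟨h, j, ?_⟩
      rw [hj]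
      simp only [Fin.val_last]
  rw [e0]
  have h1 := card_partition
    (fun p : (Fin (r+1) → Fin (b+1)) × (Fin (l+1) → Fin (b+1)) =>
      TCond p ∧ ∃ j, p.2 j = Fin.last b)
    (fun p => ∃ i, p.1 i = Fin.last b)
  have cT : Nat.card {p : (Fin (r+1) → Fin (b+1)) × (Fin (l+1) → Fin (b+1)) //
      (TCond p ∧ ∃ j, p.2 j = Fin.last b) ∧ (∃ i, p.1 i = Fin.last b)} = gN r l b := by
    rw [← card_true]
    refine Nat.card_congr (Equiv.trans (Equiv.subtypeEquivRight (fun p => ?_))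
      (equivTT (E := fun _ => True) (E' := fun _ => True) hlr (fun _ _ _ _ => Iff.rfl)))
    tauto
  have cF : Nat.card {p : (Fin (r+1) → Fin (b+1)) × (Fin (l+1) → Fin (b+1)) //
      (TCond p ∧ ∃ j, p.2 j = Fin.last b) ∧ ¬(∃ i, p.1 i = Fin.last b)} = gN (r+1) l b := by
    rw [← card_true]
    refine Nat.card_congr (Equiv.trans (Equiv.subtypeEquivRight (fun p => ?_))
      (equivFT (E := fun _ => True) (E' := fun _ => True) (fun _ _ _ _ => Iff.rfl)))
    tauto
  rw [h1, cT, cF]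
  omega

lemma Rsum_zero_of_nonpos {l : ℤ} (r m : ℤ) (β : ℕ) (h : l ≤ 0) : Rsum r l m β = 0 := by
  unfold Rsum
  apply Finset.sum_eq_zero
  intro e he
  apply Finset.sum_eq_zero
  intro f hf
  have := (Finset.mem_Icc.mp hf).1
  rw [ssytF_zero_of_neg (by omega : l - (f:ℤ) < 0), mul_zero]

lemma gN_eq_ssytF : ∀ m r l : ℕ, l ≤ r → (gN r l m : ℚ) = ssytF r l m := by
  intro m
  induction m with
  | zero =>
    intro r l hlr
    cases r with
    | zero =>
      have hl : l = 0 := by omega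
      subst hl
      rw [gN_00]
      simp only [Nat.cast_zero, Nat.cast_one]
      rw [ssytF_00 0 (le_refl 0)]
    | succ r' =>
      rw [gN_m0]
      simp only [Nat.cast_zero]
      symm
      apply ssytF_zero_of_mlt
      push_cast
      omega
  | succ m ih =>
    intro r l hlr
    cases l with
    | zero =>
      cases r with
      | zero =>
        rw [gN_00]
        push_cast
        rw [ssytF_00 ((m:ℤ)+1) (by omega)]
      | succ r' =>
        rw [gN_rec0 r' m]
        push_cast
        rw [ssytF_pascal ((r':ℤ)+1) 0 ((m:ℤ)+1) (by omega) (by omega)]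
        rw [show ((m:ℤ)+1-1) = (m:ℤ) by ring, show ((r':ℤ)+1-1) = (r':ℤ) by ring]
        have z : ∀ R M : ℤ, ssytF R (0-1) M = 0 := fun R M => ssytF_zero_of_neg (by omega)
        rw [z, z]
        rw [ih (r'+1) 0 (by omega), ih r' 0 (by omega)]
        push_cast
        ring
    | succ l' =>
      cases r with
      | zero => omega
      | succ r' =>
        have hlr' : l' ≤ r' := by omega
        rw [gN_recS r' l' m hlr']
        push_cast
        rw [ssytF_pascal ((r':ℤ)+1) ((l':ℤ)+1) ((m:ℤ)+1) (by omega) (by omega)]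
        rw [show ((m:ℤ)+1-1) = (m:ℤ) by ring, show ((r':ℤ)+1-1) = (r':ℤ) by ring,
          show ((l':ℤ)+1-1) = (l':ℤ) by ring]
        rw [ih (r'+1) (l'+1) (by omega), ih (r'+1) l' (by omega), ih r' l' hlr']
        by_cases hif : l' + 1 ≤ r'
        · rw [if_pos hif, ih r' (l'+1) hif]
          push_cast
          ring
        · rw [if_neg hif]
          have hrl : r' = l' := by omega
          subst hrl
          rw [ssytF_zero_of_lt (by omega : (r':ℤ) < (r':ℤ)+1)]
          push_cast
          ring

lemma fN_eq_Rsum (β : ℕ) (hβ : 1 ≤ β) :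
    ∀ m : ℕ, β ≤ m → ∀ r l : ℕ, 1 ≤ l → l ≤ r →
      (fN r l m β : ℚ) = Rsum r l m β := by
  refine Nat.le_induction ?_ ?_
  · -- base : m = β
    intro r l hl hlr
    obtain ⟨b, rfl⟩ : ∃ b, β = b + 1 := ⟨β - 1, by omega⟩
    obtain ⟨l', rfl⟩ : ∃ l', l = l' + 1 := ⟨l - 1, by omega⟩
    obtain ⟨r', rfl⟩ : ∃ r', r = r' + 1 := ⟨r - 1, by omega⟩
    have hlr' : l' ≤ r' := by omega
    rw [fN_base r' l' b hlr',
      Rsum_diag (b+1) (by omega) ((r'+1:ℕ):ℤ) ((l'+1:ℕ):ℤ),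
      if_pos (show ((l'+1:ℕ):ℤ) ≤ ((r'+1:ℕ):ℤ) by push_cast; omega)]
    push_cast
    rw [gN_eq_ssytF b (r'+1) l' (by omega), gN_eq_ssytF b r' l' hlr']
    push_cast
    rw [show ((l':ℤ)+1-1) = (l':ℤ) by ring, show ((b:ℤ)+1-1) = (b:ℤ) by ring,
      show ((r':ℤ)+1-1) = (r':ℤ) by ring]
  · -- step
    intro m hβm ih r l hl hlr
    obtain ⟨l', rfl⟩ : ∃ l', l = l' + 1 := ⟨l - 1, by omega⟩
    obtain ⟨r', rfl⟩ : ∃ r', r = r' + 1 := ⟨r - 1, by omega⟩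
    have hlr' : l' ≤ r' := by omega
    rw [fN_recS r' l' m β hlr' hβm]
    push_cast
    rw [Rsum_rec ((r':ℤ)+1) ((l':ℤ)+1) ((m:ℤ)+1) β (by omega) (by omega)]
    rw [show ((m:ℤ)+1-1) = (m:ℤ) by ring, show ((r':ℤ)+1-1) = (r':ℤ) by ring,
      show ((l':ℤ)+1-1) = (l':ℤ) by ring]
    have t1 := ih (r'+1) (l'+1) (by omega) (by omega)
    have t2 : ((if l' + 1 ≤ r' then fN r' (l'+1) m β else 0 : ℕ) : ℚ)
        = Rsum ((r':ℕ):ℤ) ((l'+1:ℕ):ℤ) ((m:ℕ):ℤ) β := by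
      by_cases hif : l' + 1 ≤ r'
      · rw [if_pos hif]
        exact ih r' (l'+1) (by omega) hif
      · rw [if_neg hif]
        rw [Rsum_zero_of_lt _ _ (by push_cast; omega)]
        norm_num
    have t3 : ((fN (r'+1) l' m β : ℕ) : ℚ) = Rsum ((r'+1:ℕ):ℤ) ((l':ℕ):ℤ) ((m:ℕ):ℤ) β := by
      cases l' with
      | zero =>
        rw [fN_l0, Rsum_zero_of_nonpos _ _ _ (by omega)]
        norm_num
      | succ l'' => exact ih (r'+1) (l''+1) (by omega) (by omega)
    have t4 : ((fN r' l' m β : ℕ) : ℚ) = Rsum ((r':ℕ):ℤ) ((l':ℕ):ℤ) ((m:ℕ):ℤ) β := by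
      cases l' with
      | zero =>
        rw [fN_l0, Rsum_zero_of_nonpos _ _ _ (by omega)]
        norm_num
      | succ l'' => exact ih r' (l''+1) (by omega) hlr'
    push_cast at t1 t2 t3 t4
    rw [t1, t2, t3, t4]

/-- For `m ≥ r ≥ l ≥ 1` and `1 ≤ β < m`,
`Y_{r,l}^β(m) = Σ_{1≤f≤e≤β} N_{e-1,f-1} · SSYT_{r-f,l-f}(m-e)`. -/
theorem Ycard_eq_narayana (r l m β : ℕ) (hl : 1 ≤ l) (hlr : l ≤ r) (hrm : r ≤ m)
    (hβ : 1 ≤ β) (hβm : β < m) :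
    (Ycard r l m β : ℚ) =
      ∑ e ∈ Finset.Icc 1 β, ∑ f ∈ Finset.Icc 1 e,
        Nar (e - 1) (f - 1) *
          ssytF ((r : ℤ) - (f : ℤ)) ((l : ℤ) - (f : ℤ)) ((m : ℤ) - (e : ℤ)) := by
  have hy : (Ycard r l m β : ℚ) = (fN r l m β : ℚ) := rfl
  rw [hy, fN_eq_Rsum β hβ m (by omega) r l hl hlr]
  rfl
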